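/- Let K be a finite field and S an extremally disconnected compact Hausdorff space. Then the constant sheaf 𝒦 associated with the K-module K is an injective object of the category of sheaves of K-modules on S. -/

import Mathlib

open CategoryTheory TopologicalSpace CategoryTheory.Limits Opposite

noncomputable section
namespace StmtAux

variable (K : Type) [Field K]
variable (S : Type) [TopologicalSpace S]

/-- The presheaf of all `K`-valued functions. -/
abbrev funPresheaf : TopCat.Presheaf (ModuleCat.{0} K) (TopCat.of S) where
  obj U := ModuleCat.of K (↥(unop U) → K)
  map {U V} i := ModuleCat.ofHom
    { toFun := fun f v => f ⟨v.1, i.unop.le v.2⟩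
      map_add' := fun _ _ => rfl
      map_smul' := fun _ _ => rfl }
  map_id _ := rfl
  map_comp _ _ := rfl

lemma funPresheaf_isSheaf : (funPresheaf K S).IsSheaf := by
  rw [TopCat.Presheaf.isSheaf_iff_isSheafUniqueGluing]
  intro ι U sf compat
  have key : ∀ (i j : ι) (x : S) (hi : x ∈ U i) (hj : x ∈ U j),
      (sf i : ↥(U i) → K) ⟨x, hi⟩ = (sf j : ↥(U j) → K) ⟨x, hj⟩ := fun i j x hi hj =>
    congrFun (compat i j) (⟨x, ⟨hi, hj⟩⟩ : ↥(U i ⊓ U j))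
  refine ⟨fun v => sf (Opens.mem_iSup.mp v.2).choose ⟨v.1, (Opens.mem_iSup.mp v.2).choose_spec⟩,
    fun i => funext fun v => key _ i v.1 _ v.2, fun t ht => funext fun v => ?_⟩
  have h1 := congrFun (ht (Opens.mem_iSup.mp v.2).choose)
    (⟨v.1, (Opens.mem_iSup.mp v.2).choose_spec⟩ : ↥(U (Opens.mem_iSup.mp v.2).choose))
  have h2 : (⟨v.1, (Opens.leSupr U _).le (Opens.mem_iSup.mp v.2).choose_spec⟩ : ↥(iSup U)) = v :=
    Subtype.ext rfl
  exact (h2 ▸ h1 : t v = _)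

/-- The sheaf of all `K`-valued functions. -/
abbrev funSheaf : TopCat.Sheaf (ModuleCat.{0} K) (TopCat.of S) :=
  ⟨funPresheaf K S, funPresheaf_isSheaf K S⟩

end StmtAux

namespace StmtAux
set_option linter.unusedSectionVars false

variable (K : Type) [Field K]
variable (S : Type) [TopologicalSpace S]

/-- The submodule of locally constant functions. -/
def lcSubmodule (U : Opens S) : Submodule K (↥U → K) where
  carrier := {f | IsLocallyConstant f}
  add_mem' := fun hf hg => hf.add hg
  zero_mem' := IsLocallyConstant.const 0
  smul_mem' := fun c _ hf => hf.comp (c • ·)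

/-- The presheaf of locally constant `K`-valued functions. -/
abbrev lcPresheaf : TopCat.Presheaf (ModuleCat.{0} K) (TopCat.of S) where
  obj U := ModuleCat.of K (lcSubmodule K S (unop U))
  map {U V} i := ModuleCat.ofHom
    { toFun := fun f => ⟨fun v => f.1 ⟨v.1, i.unop.le v.2⟩,
        f.2.comp_continuous (Continuous.subtype_mk continuous_subtype_val _)⟩
      map_add' := fun _ _ => rfl
      map_smul' := fun _ _ => rfl }
  map_id _ := rfl
  map_comp _ _ := rfl

lemma isLocallyConstant_of_local {U : Opens S} (g : ↥U → K)
    (h : ∀ v : ↥U, ∃ O : Set S, IsOpen O ∧ v.1 ∈ O ∧ ∀ w : ↥U, w.1 ∈ O → g w = g v) :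
    IsLocallyConstant g := by
  rw [IsLocallyConstant.iff_eventually_eq]
  intro v
  obtain ⟨O, hO, hvO, hcon⟩ := h v
  have hmem : Subtype.val ⁻¹' O ∈ nhds v := (hO.preimage continuous_subtype_val).mem_nhds hvO
  filter_upwards [hmem] with w hw using hcon w hw

lemma exists_open_const {U : Opens S} {g : ↥U → K} (hg : IsLocallyConstant g) (v : ↥U) :
    ∃ O : Set S, IsOpen O ∧ v.1 ∈ O ∧ ∀ w : ↥U, w.1 ∈ O → g w = g v := by
  obtain ⟨W, hW, hvW, hconst⟩ := hg.exists_open v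
  obtain ⟨O, hO, rfl⟩ := isOpen_induced_iff.mp hW
  exact ⟨O, hO, hvW, fun w hw => hconst w hw⟩

lemma lcPresheaf_isSheaf : (lcPresheaf K S).IsSheaf := by
  rw [TopCat.Presheaf.isSheaf_iff_isSheafUniqueGluing]
  intro ι U sf compat
  have key : ∀ (i j : ι) (x : S) (hi : x ∈ U i) (hj : x ∈ U j),
      (sf i : lcSubmodule K S (U i)).1 ⟨x, hi⟩ = (sf j : lcSubmodule K S (U j)).1 ⟨x, hj⟩ := fun i j x hi hj =>
    congrFun (congrArg Subtype.val (compat i j)) (⟨x, ⟨hi, hj⟩⟩ : ↥(U i ⊓ U j))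
  set g : ↥(iSup U) → K := fun v =>
    (sf (Opens.mem_iSup.mp v.2).choose).1 ⟨v.1, (Opens.mem_iSup.mp v.2).choose_spec⟩ with hg
  have hlc : IsLocallyConstant g := by
    apply isLocallyConstant_of_local
    intro v
    set i := (Opens.mem_iSup.mp v.2).choose with hi
    have hvi : v.1 ∈ U i := (Opens.mem_iSup.mp v.2).choose_spec
    obtain ⟨O, hO, hvO, hcon⟩ := exists_open_const K S (sf i).2 ⟨v.1, hvi⟩
    refine ⟨O ∩ U i, hO.inter (U i).2, ⟨hvO, hvi⟩, fun w hw => ?_⟩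
    calc g w = (sf i).1 ⟨w.1, hw.2⟩ := key _ i w.1 _ hw.2
    _ = (sf i).1 ⟨v.1, hvi⟩ := hcon ⟨w.1, hw.2⟩ hw.1
    _ = g v := rfl
  refine ⟨⟨g, hlc⟩, fun i => Subtype.ext (funext fun v => key _ i v.1 _ v.2),
    fun t ht => Subtype.ext (funext fun v => ?_)⟩
  have h1 := congrFun (congrArg Subtype.val (ht (Opens.mem_iSup.mp v.2).choose))
    (⟨v.1, (Opens.mem_iSup.mp v.2).choose_spec⟩ : ↥(U (Opens.mem_iSup.mp v.2).choose))
  have h2 : (⟨v.1, (Opens.leSupr U _).le (Opens.mem_iSup.mp v.2).choose_spec⟩ : ↥(iSup U)) = v :=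
    Subtype.ext rfl
  exact (h2 ▸ h1 : t.1 v = _)

/-- The sheaf of locally constant `K`-valued functions. -/
abbrev lcSheaf : TopCat.Sheaf (ModuleCat.{0} K) (TopCat.of S) :=
  ⟨lcPresheaf K S, lcPresheaf_isSheaf K S⟩

section Ultra

variable {K S}
variable [Finite K]

/-- The value of a finite-codomain function along an ultrafilter. -/
noncomputable def ulVal (u : Ultrafilter S) (f : S → K) : K :=
  ((u.map f).eq_pure_of_finite).choose

lemma mem_ulVal (u : Ultrafilter S) (f : S → K) : f ⁻¹' {ulVal u f} ∈ u := by
  have h := ((u.map f).eq_pure_of_finite).choose_spec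
  have : {ulVal u f} ∈ u.map f := by rw [h]; exact rfl
  exact this

lemma ulVal_eq {u : Ultrafilter S} {f : S → K} {k : K} (h : f ⁻¹' {k} ∈ u) :
    ulVal u f = k := by
  by_contra hne
  have h2 := mem_ulVal u f
  obtain ⟨x, hx⟩ := Ultrafilter.nonempty_of_mem (u.inter_mem h2 h)
  exact hne (hx.1.symm.trans hx.2)

lemma ulVal_congr {u : Ultrafilter S} {f g : S → K} (h : {x | f x = g x} ∈ u) :
    ulVal u f = ulVal u g := by
  apply ulVal_eq
  filter_upwards [mem_ulVal u g, h] with x h1 h2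
  exact h2.trans h1

lemma ulVal_add (u : Ultrafilter S) (f g : S → K) :
    ulVal u (f + g) = ulVal u f + ulVal u g := by
  apply ulVal_eq
  filter_upwards [mem_ulVal u f, mem_ulVal u g] with x h1 h2
  simp only [Pi.add_apply, Set.mem_preimage, Set.mem_singleton_iff] at *
  rw [h1, h2]

lemma ulVal_smul (u : Ultrafilter S) (c : K) (f : S → K) :
    ulVal u (c • f) = c • ulVal u f := by
  apply ulVal_eq
  filter_upwards [mem_ulVal u f] with x h1
  simp only [Pi.smul_apply, Set.mem_preimage, Set.mem_singleton_iff] at *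
  rw [h1]

lemma isLocallyConstant_ulVal (f : S → K) :
    IsLocallyConstant (fun u : Ultrafilter S => ulVal u f) := by
  rw [IsLocallyConstant.iff_isOpen_fiber]
  intro k
  convert ultrafilter_isOpen_basic (f ⁻¹' {k})
  ext u
  constructor
  · rintro rfl; exact mem_ulVal u f
  · exact fun h => ulVal_eq h

end Ultra

section Sigma

variable {S}
variable [CompactSpace S] [T2Space S] [ExtremallyDisconnected S]

/-- A continuous choice of convergent ultrafilters, from extremal disconnectedness. -/
lemma exists_sigma : ∃ σ : S → Ultrafilter S, Continuous σ ∧ ∀ s, (σ s : Filter S) ≤ nhds s := by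
  have hπc : Continuous (Ultrafilter.extend (id : S → S)) := continuous_ultrafilter_extend id
  have hπs : Function.Surjective (Ultrafilter.extend (id : S → S)) := fun s =>
    ⟨pure s, congrFun (ultrafilter_extend_extends (id : S → S)) s⟩
  obtain ⟨σ, hσc, hσ⟩ := CompactT2.ExtremallyDisconnected.projective
    (f := (id : S → S)) (g := Ultrafilter.extend (id : S → S)) continuous_id hπc hπs
  refine ⟨σ, hσc, fun s => ?_⟩
  have h1 : Ultrafilter.extend (id : S → S) (σ s) = s := congrFun hσ s
  have h2 := ultrafilter_extend_eq_iff.mp h1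
  rwa [Ultrafilter.map_id] at h2

end Sigma

section Retract

variable [Finite K] [CompactSpace S] [T2Space S] [ExtremallyDisconnected S]

/-- A fixed continuous choice of convergent ultrafilters. -/
noncomputable def sigma : S → Ultrafilter S := (exists_sigma (S := S)).choose

lemma sigma_cont : Continuous (sigma S) := (exists_sigma (S := S)).choose_spec.1

lemma sigma_le (s : S) : (sigma S s : Filter S) ≤ nhds s :=
  (exists_sigma (S := S)).choose_spec.2 s

lemma mem_sigma {U : Set S} (hU : IsOpen U) {s : S} (hs : s ∈ U) : U ∈ sigma S s :=
  (sigma_le S s) (hU.mem_nhds hs)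

/-- Extension of a function on an open set by zero. -/
noncomputable def extFun {S : Type} [TopologicalSpace S] (U : Opens S) (f : ↥U → K) : S → K :=
  fun x => letI := Classical.dec (x ∈ U); if h : x ∈ U then f ⟨x, h⟩ else 0

lemma extFun_pos {S : Type} [TopologicalSpace S] (U : Opens S) (f : ↥U → K) {x : S}
    (h : x ∈ U) : extFun K U f x = f ⟨x, h⟩ := by
  simp only [extFun]
  exact dif_pos h

lemma extFun_add (U : Opens S) (f g : ↥U → K) :
    extFun K U (f + g) = extFun K U f + extFun K U g := by
  funext x
  simp only [extFun, Pi.add_apply]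
  by_cases h : x ∈ U
  · rw [dif_pos h, dif_pos h, dif_pos h]
  · rw [dif_neg h, dif_neg h, dif_neg h, add_zero]

lemma extFun_smul (U : Opens S) (c : K) (f : ↥U → K) :
    extFun K U (c • f) = c • extFun K U f := by
  funext x
  simp only [extFun, Pi.smul_apply]
  by_cases h : x ∈ U
  · rw [dif_pos h, dif_pos h]
  · rw [dif_neg h, dif_neg h, smul_zero]

/-- The retraction, sectionwise. -/
noncomputable def rApp (U : Opens S) : (↥U → K) →ₗ[K] lcSubmodule K S U where
  toFun f := ⟨fun v => ulVal (sigma S v.1) (extFun K U f),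
    (isLocallyConstant_ulVal (extFun K U f)).comp_continuous
      ((sigma_cont S).comp continuous_subtype_val)⟩
  map_add' f g := Subtype.ext (funext fun v => by
    show ulVal (sigma S v.1) (extFun K U (f + g)) = _
    rw [extFun_add, ulVal_add]; rfl)
  map_smul' c f := Subtype.ext (funext fun v => by
    show ulVal (sigma S v.1) (extFun K U (c • f)) = _
    rw [extFun_smul, ulVal_smul]; rfl)

/-- The inclusion of locally constant functions into all functions. -/
def inc : lcSheaf K S ⟶ funSheaf K S :=
  ⟨{ app := fun U => ModuleCat.ofHom (lcSubmodule K S (unop U)).subtype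
     naturality := fun _ _ _ => rfl }⟩

/-- The retraction of sheaves. -/
noncomputable def retr : funSheaf K S ⟶ lcSheaf K S := by
  refine ⟨{ app := fun U => ModuleCat.ofHom (rApp K S (unop U)), naturality := fun U V i => ?_ }⟩
  ext f v
  show ulVal (sigma S v.1) (extFun K (unop V) _) = ulVal (sigma S v.1) (extFun K (unop U) f)
  apply ulVal_congr
  have hm : ((unop V : Opens S) : Set S) ∈ sigma S v.1 := mem_sigma S (unop V).2 v.2
  filter_upwards [hm] with x hx
  show extFun K (unop V) _ x = extFun K (unop U) f x
  rw [extFun_pos K _ _ hx, extFun_pos K _ f (i.unop.le hx)]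
  rfl

lemma inc_retr : inc K S ≫ retr K S = 𝟙 (lcSheaf K S) := by
  apply Sheaf.hom_ext
  apply NatTrans.ext
  funext U
  apply ModuleCat.hom_ext
  apply LinearMap.ext
  intro f
  refine Subtype.ext (funext fun v => ?_)
  show ulVal (sigma S v.1) (extFun K (unop U) f.1) = f.1 v
  obtain ⟨O, hO, hvO, hcon⟩ := exists_open_const K S f.2 v
  apply ulVal_eq
  have hm : (O ∩ ((unop U : Opens S) : Set S)) ∈ sigma S v.1 := mem_sigma S (hO.inter (unop U).2) ⟨hvO, v.2⟩
  filter_upwards [hm] with x hx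
  show extFun K (unop U) f.1 x ∈ ({f.1 v} : Set K)
  rw [extFun_pos K _ _ hx.2]
  exact hcon ⟨x, hx.2⟩ hx.1

end Retract

section InjectiveFun

open TopCat TopCat.Presheaf

lemma moduleCat_injective (V : ModuleCat.{0} K) : Injective V := by
  constructor
  intro A B g f hf
  have hinj : Function.Injective f := (ModuleCat.mono_iff_injective f).mp hf
  obtain ⟨h, hh⟩ := f.hom.exists_leftInverse_of_injective
    (LinearMap.ker_eq_bot.mpr hinj)
  refine ⟨ModuleCat.ofHom (g.hom.comp h), ?_⟩
  apply ModuleCat.hom_ext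
  apply LinearMap.ext
  intro a
  show g (h (f a)) = g a
  rw [show h (f a) = a from LinearMap.congr_fun hh a]

/-- The cocone used to define evaluation on stalks of the function sheaf. -/
def evalCocone (s : S) :
    Limits.Cocone ((OpenNhds.inclusion (s : ↥(TopCat.of S))).op ⋙ funPresheaf K S) where
  pt := ModuleCat.of K K
  ι :=
    { app := fun V => ModuleCat.ofHom
        { toFun := fun f => f ⟨s, V.unop.2⟩
          map_add' := fun _ _ => rfl
          map_smul' := fun _ _ => rfl }
      naturality := fun _ _ _ => rfl }

/-- Evaluation of the stalk of the function sheaf at a point. -/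
noncomputable def evalStalk (s : S) :
    (funPresheaf K S).stalk s ⟶ ModuleCat.of K K :=
  Limits.colimit.desc _ (evalCocone K S s)

lemma germ_evalStalk (U : Opens S) (s : S) (hs : s ∈ U) (f : ↥U → K) :
    evalStalk K S s ((funPresheaf K S).germ U s hs f) = f ⟨s, hs⟩ := by
  have h := Limits.colimit.ι_desc (evalCocone K S s) (op ⟨U, hs⟩)
  exact ConcreteCategory.congr_hom h f

theorem funSheaf_injective : Injective (funSheaf K S) := by
  constructor
  intro A B g f hf
  haveI : ∀ x : ↥(TopCat.of S), Mono ((stalkFunctor (ModuleCat.{0} K) x).map f.hom) :=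
    stalk_mono_of_mono f
  haveI : Injective (ModuleCat.of K K) := moduleCat_injective K _
  let φ : ∀ s : ↥(TopCat.of S), (stalkFunctor (ModuleCat.{0} K) s).obj A.obj ⟶
      ModuleCat.of K K := fun s =>
    (stalkFunctor (ModuleCat.{0} K) s).map g.hom ≫ evalStalk K S s
  let ψ : ∀ s : ↥(TopCat.of S), (stalkFunctor (ModuleCat.{0} K) s).obj B.obj ⟶
      ModuleCat.of K K := fun s =>
    Injective.factorThru (φ s) ((stalkFunctor (ModuleCat.{0} K) s).map f.hom)
  let hB : B ⟶ funSheaf K S := ⟨{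
    app := fun U => ModuleCat.ofHom
      { toFun := fun b v => ψ v.1 (TopCat.Presheaf.germ B.obj (unop U) v.1 v.2 b)
        map_add' := fun b b' => funext fun v => (by
          show ψ v.1 (TopCat.Presheaf.germ B.obj (unop U) v.1 v.2 (b + b'))
            = ψ v.1 (TopCat.Presheaf.germ B.obj (unop U) v.1 v.2 b)
              + ψ v.1 (TopCat.Presheaf.germ B.obj (unop U) v.1 v.2 b')
          rw [map_add]; exact map_add _ _ _)
        map_smul' := fun c b => funext fun v => (by
          show ψ v.1 (TopCat.Presheaf.germ B.obj (unop U) v.1 v.2 (c • b))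
            = c • ψ v.1 (TopCat.Presheaf.germ B.obj (unop U) v.1 v.2 b)
          rw [map_smul]; exact map_smul _ _ _) }
    naturality := fun U V i => by
      apply ModuleCat.hom_ext
      apply LinearMap.ext
      intro b
      funext v
      exact congrArg (ψ v.1)
        (TopCat.Presheaf.germ_res_apply' B.obj i v.1 v.2 b) }⟩
  refine ⟨hB, ?_⟩
  apply CategoryTheory.Sheaf.hom_ext
  apply NatTrans.ext
  funext U
  apply ModuleCat.hom_ext
  apply LinearMap.ext
  intro a
  funext v
  show ψ v.1 (TopCat.Presheaf.germ B.obj (unop U) v.1 v.2 (f.hom.app U a)) = g.hom.app U a v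
  have e1 : ψ v.1 (TopCat.Presheaf.germ B.obj (unop U) v.1 v.2 (f.hom.app U a))
      = ψ v.1 (((stalkFunctor (ModuleCat.{0} K) v.1).map f.hom)
          (TopCat.Presheaf.germ A.obj (unop U) v.1 v.2 a)) :=
    congrArg (ψ v.1)
      (TopCat.Presheaf.stalkFunctor_map_germ_apply (unop U) v.1 v.2 f.hom a).symm
  have e2 : ψ v.1 (((stalkFunctor (ModuleCat.{0} K) v.1).map f.hom)
        (TopCat.Presheaf.germ A.obj (unop U) v.1 v.2 a))
      = φ v.1 (TopCat.Presheaf.germ A.obj (unop U) v.1 v.2 a) :=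
    ConcreteCategory.congr_hom
      (Injective.comp_factorThru (φ v.1) ((stalkFunctor (ModuleCat.{0} K) v.1).map f.hom))
      (TopCat.Presheaf.germ A.obj (unop U) v.1 v.2 a)
  have e3 : φ v.1 (TopCat.Presheaf.germ A.obj (unop U) v.1 v.2 a)
      = evalStalk K S v.1 ((funPresheaf K S).germ (unop U) v.1 v.2 (g.hom.app U a)) :=
    congrArg (evalStalk K S v.1)
      (TopCat.Presheaf.stalkFunctor_map_germ_apply (unop U) v.1 v.2 g.hom a)
  exact ((e1.trans e2).trans e3).trans (germ_evalStalk K S (unop U) v.1 v.2 (g.hom.app U a))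

end InjectiveFun

section Assemble

variable [Finite K] [CompactSpace S] [T2Space S] [ExtremallyDisconnected S]

theorem lcSheaf_injective : Injective (lcSheaf K S) := by
  constructor
  intro A B q f hf
  haveI := funSheaf_injective K S
  refine ⟨Injective.factorThru (q ≫ inc K S) f ≫ retr K S, ?_⟩
  rw [← Category.assoc, Injective.comp_factorThru, Category.assoc, inc_retr, Category.comp_id]

/-- The comparison map from the constant presheaf to the locally constant sheaf. -/
def constToLc : (Functor.const (Opens S)ᵒᵖ).obj (ModuleCat.of K K) ⟶ (lcSheaf K S).val where
  app U := ModuleCat.ofHom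
    { toFun := fun c => ⟨fun _ => c, IsLocallyConstant.const c⟩
      map_add' := fun _ _ => rfl
      map_smul' := fun _ _ => rfl }
  naturality _ _ _ := rfl

lemma constToLc_locallyInjective :
    Presheaf.IsLocallyInjective (Opens.grothendieckTopology S) (constToLc K S) := by
  constructor
  intro X c d h
  intro x hx
  have hcd : c = d := congrFun (congrArg Subtype.val h) ⟨x, hx⟩
  refine ⟨X.unop, 𝟙 _, ?_, hx⟩
  show ((Functor.const (Opens S)ᵒᵖ).obj (ModuleCat.of K K)).map (𝟙 X.unop).op c = _
  subst hcd
  rfl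

lemma constToLc_locallySurjective :
    Presheaf.IsLocallySurjective (Opens.grothendieckTopology S) (constToLc K S) := by
  constructor
  intro U s
  intro x hx
  obtain ⟨O, hO, hxO, hcon⟩ := exists_open_const K S s.2 ⟨x, hx⟩
  refine ⟨(⟨O, hO⟩ : Opens S) ⊓ U, homOfLE inf_le_right, ⟨s.1 ⟨x, hx⟩, ?_⟩, ⟨hxO, hx⟩⟩
  refine Subtype.ext (funext fun w => ?_)
  exact (hcon ⟨w.1, w.2.2⟩ w.2.1).symm

end Assemble

end StmtAux

open StmtAux in
/-- Let `K` be a finite field and `S` an extremally disconnected compact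
Hausdorff space. Then the constant sheaf associated with the `K`-module `K` is an injective
object of the category of sheaves of `K`-modules on `S`. -/
theorem stmt_1 (K : Type) [Field K] [Finite K]
    (S : Type) [TopologicalSpace S] [CompactSpace S] [T2Space S] [ExtremallyDisconnected S] :
    Injective ((constantSheaf (Opens.grothendieckTopology S) (ModuleCat K)).obj
      (ModuleCat.of K K)) := by
  haveI := constToLc_locallyInjective K S
  haveI := constToLc_locallySurjective K S
  have hW : (Opens.grothendieckTopology S).W (constToLc K S) :=
    (Opens.grothendieckTopology S).W_of_isLocallyBijective (constToLc K S)
  rw [GrothendieckTopology.W_iff] at hW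
  haveI := hW
  have i1 : (constantSheaf (Opens.grothendieckTopology S) (ModuleCat K)).obj (ModuleCat.of K K)
      ≅ (presheafToSheaf (Opens.grothendieckTopology S) (ModuleCat K)).obj (lcSheaf K S).val :=
    @asIso _ _ _ _ ((presheafToSheaf (Opens.grothendieckTopology S) (ModuleCat K)).map (constToLc K S)) hW
  have i2 : (presheafToSheaf (Opens.grothendieckTopology S) (ModuleCat K)).obj (lcSheaf K S).val
      ≅ lcSheaf K S :=
    asIso ((sheafificationAdjunction (Opens.grothendieckTopology S) (ModuleCat K)).counit.app
      (lcSheaf K S))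
  exact Injective.of_iso (i1 ≪≫ i2).symm (lcSheaf_injective K S)
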